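/- With B₋ and A as above, A⁺ = B₋[B₋⁻¹A]₊ is a Laurent polynomial matrix with min deg(A⁺) ≥ −λ and max deg(A⁺) = deg(A). -/

import Mathlib

/-- The coefficient at `k ∈ ℕ` of `[B₋⁻¹A]₊`, namely `D k = Σ_i G_i A_{k+i}`. -/
noncomputable def Dcoef {n m : ℕ} (G : ℕ → Matrix (Fin n) (Fin n) ℝ)
    (A : ℕ → Matrix (Fin n) (Fin m) ℝ) (kap k : ℕ) : Matrix (Fin n) (Fin m) ℝ :=
  ∑ i ∈ Finset.range (kap - k + 1), G i * A (k + i)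

/-- The Laurent coefficient of `A⁺ = B₋ [B₋⁻¹A]₊` at `k ∈ ℤ`:
`Σ_{j=0}^λ F_j D_{k+j}` where `D` is supported on nonnegative indices. -/
noncomputable def Apcoef {n m : ℕ} (F : ℕ → Matrix (Fin n) (Fin n) ℝ)
    (G : ℕ → Matrix (Fin n) (Fin n) ℝ) (A : ℕ → Matrix (Fin n) (Fin m) ℝ)
    (lam kap : ℕ) (k : ℤ) : Matrix (Fin n) (Fin m) ℝ :=
  ∑ j ∈ Finset.range (lam + 1),
    F j * (if 0 ≤ k + (j : ℤ) then Dcoef G A kap (k + (j : ℤ)).toNat else 0)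

/-- `A⁺ = B₋ [B₋⁻¹A]₊` is a Laurent polynomial matrix with
`min deg(A⁺) ≥ -λ` and `max deg(A⁺) = deg A = κ`. -/
theorem stmt6 {n m lam kap : ℕ}
    (F : ℕ → Matrix (Fin n) (Fin n) ℝ) (hF0 : F 0 = 1)
    (hFsupp : ∀ j : ℕ, lam < j → F j = 0)
    (hFinv : ∀ z : ℂ, 1 ≤ ‖z‖ →
      IsUnit (∑ j ∈ Finset.range (lam + 1), (z ^ (-(j : ℤ))) • (F j).map (algebraMap ℝ ℂ)))
    (G : ℕ → Matrix (Fin n) (Fin n) ℝ)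
    (hG : ∀ k : ℕ, ∑ j ∈ Finset.range (k + 1), F j * G (k - j)
        = if k = 0 then (1 : Matrix (Fin n) (Fin n) ℝ) else 0)
    (A : ℕ → Matrix (Fin n) (Fin m) ℝ)
    (hA : IsGreatest {k : ℕ | A k ≠ 0} kap) :
    (∀ k : ℤ, Apcoef F G A lam kap k ≠ 0 → -(lam : ℤ) ≤ k) ∧
    Apcoef F G A lam kap (kap : ℤ) ≠ 0 ∧
    (∀ k : ℤ, (kap : ℤ) < k → Apcoef F G A lam kap k = 0) := by
  have hG0 : G 0 = 1 := by
    have h := hG 0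
    simpa [hF0] using h
  have hAz : ∀ k : ℕ, kap < k → A k = 0 := by
    intro k hk
    by_contra h
    exact absurd (hA.2 h) (not_le.mpr hk)
  have hDz : ∀ k : ℕ, kap < k → Dcoef G A kap k = 0 := by
    intro k hk
    unfold Dcoef
    have h1 : kap - k + 1 = 1 := by omega
    rw [h1]
    simp [hAz k hk]
  refine ⟨?_, ?_, ?_⟩
  · intro k hk
    by_contra h
    push_neg at h
    apply hk
    unfold Apcoef
    apply Finset.sum_eq_zero
    intro j hj
    have hj' : ¬ (0 ≤ k + (j : ℤ)) := by
      simp only [Finset.mem_range] at hj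
      omega
    rw [if_neg hj', Matrix.mul_zero]
  · unfold Apcoef
    rw [Finset.sum_range_succ']
    have htail : ∀ j ∈ Finset.range lam,
        F (j + 1) * (if 0 ≤ (kap : ℤ) + ((j + 1 : ℕ) : ℤ) then
          Dcoef G A kap ((kap : ℤ) + ((j + 1 : ℕ) : ℤ)).toNat else 0) = 0 := by
      intro j _
      have h0 : (0 : ℤ) ≤ (kap : ℤ) + ((j + 1 : ℕ) : ℤ) := by positivity
      rw [if_pos h0]
      have h1 : ((kap : ℤ) + ((j + 1 : ℕ) : ℤ)).toNat = kap + (j + 1) := by omega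
      rw [h1, hDz _ (by omega), Matrix.mul_zero]
    rw [Finset.sum_eq_zero htail, zero_add]
    have h0 : (0 : ℤ) ≤ (kap : ℤ) + ((0 : ℕ) : ℤ) := by simp
    rw [if_pos h0]
    have h1 : ((kap : ℤ) + ((0 : ℕ) : ℤ)).toNat = kap := by omega
    rw [h1, hF0, Matrix.one_mul]
    unfold Dcoef
    have h2 : kap - kap + 1 = 1 := by omega
    rw [h2]
    simpa [hG0] using hA.1
  · intro k hk
    unfold Apcoef
    apply Finset.sum_eq_zero
    intro j _
    have h0 : (0 : ℤ) ≤ k + (j : ℤ) := by omega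
    rw [if_pos h0]
    have h1 : kap < (k + (j : ℤ)).toNat := by omega
    rw [hDz _ h1, Matrix.mul_zero]
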